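/- arXiv:1001.3173 — 6 statements merged into one kernel-verified Lean document; each statement's English description precedes it below -/
import Mathlib

section
/- Let γ_s, γ_c > 0, p₁ ∈ (0,1) and K > 0. Then the sequence N ↦ E_NoCSIS(N,K) := (1/8)·N·K·γ_c·γ_s/(γ_c·(NK+1) + (p₁·γ_s + 1)·(K+1)) converges to γ_s/8 as N → ∞. -/
open Filter Topology

/-- As the number of antennas `N → ∞`, the no-CSIS error exponent
`E_NoCSIS(N,K) = (1/8)·N·K·γ_c·γ_s/(γ_c·(NK+1) + (p₁·γ_s + 1)·(K+1))` converges to `γ_s/8`. -/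
theorem stmt5 (γs γc p₁ K : ℝ) (hγs : 0 < γs) (hγc : 0 < γc)
    (hp₁ : p₁ ∈ Set.Ioo (0 : ℝ) 1) (hK : 0 < K) :
    Tendsto (fun N : ℕ =>
        (1 / 8) * ((N : ℝ) * K * γc * γs /
          (γc * ((N : ℝ) * K + 1) + (p₁ * γs + 1) * (K + 1))))
      atTop (nhds (γs / 8)) := by
  obtain ⟨hp0, hp1⟩ := hp₁
  set C : ℝ := γc + (p₁ * γs + 1) * (K + 1) with hC
  have hCpos : 0 < C := by positivity
  have hg : Tendsto (fun N : ℕ => γc * K + C * (1 / (N : ℝ))) atTop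
      (nhds (γc * K)) := by
    have : Tendsto (fun n : ℕ => 1 / (n : ℝ)) atTop (nhds 0) := tendsto_one_div_atTop_nhds_zero_nat
    have h2 := this.const_mul C
    simpa using (tendsto_const_nhds (x := γc * K)).add h2
  have hmain : Tendsto (fun N : ℕ =>
      (1 / 8) * (K * γc * γs / (γc * K + C * (1 / (N : ℝ))))) atTop
      (nhds (γs / 8)) := by
    have hne : γc * K ≠ 0 := by positivity
    have := (tendsto_const_nhds (x := K * γc * γs)).div hg hne
    have h := this.const_mul (1 / 8 : ℝ)
    have : (1 / 8 : ℝ) * (K * γc * γs / (γc * K)) = γs / 8 := by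
      field_simp
    rw [this] at h
    exact h
  refine hmain.congr' ?_
  filter_upwards [eventually_ge_atTop 1] with N hN
  have hNpos : (0 : ℝ) < N := by exact_mod_cast hN
  have hden : γc * ((N : ℝ) * K + 1) + (p₁ * γs + 1) * (K + 1)
      = (γc * K + C * (1 / (N : ℝ))) * N := by
    field_simp [hC]; ring
  rw [hden]
  have hg0 : 0 < γc * K + C * (1 / (N : ℝ)) := by positivity
  field_simp
end

section
/- Let L be a positive integer, h ∈ ℂ^L, and let a, b, P > 0. Then for every α ∈ ℂ^L with Σ_{i=1}^L |α_i|² ≤ P, we have |Σ_{i=1}^L α_i h_i|² / (a·Σ_{i=1}^L |α_i|²·|h_i|² + b) ≤ Σ_{l=1}^L P·|h_l|² / (a·P·|h_l|² + b). -/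
open BigOperators

/-- Upper bound for the single-antenna full-CSIS optimization: for every gain vector `α`
satisfying the power constraint `Σ|α_i|² ≤ P`, the generalized SNR is at most
`Σ_l P·|h_l|²/(a·P·|h_l|² + b)`. -/
theorem stmt8 (L : ℕ) (hL : 0 < L) (h : Fin L → ℂ) (a b P : ℝ)
    (ha : 0 < a) (hb : 0 < b) (hP : 0 < P)
    (α : Fin L → ℂ) (hα : ∑ i, ‖α i‖ ^ 2 ≤ P) :
    ‖∑ i, α i * h i‖ ^ 2 /
        (a * ∑ i, ‖α i‖ ^ 2 * ‖h i‖ ^ 2 + b) ≤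
      ∑ l, P * ‖h l‖ ^ 2 / (a * P * ‖h l‖ ^ 2 + b) := by
  set S := ∑ i, ‖α i‖ ^ 2 * ‖h i‖ ^ 2 with hS
  have hSnn : 0 ≤ S := Finset.sum_nonneg fun i _ => by positivity
  have hD : 0 < a * S + b := by positivity
  rw [div_le_iff₀ hD]
  set w : Fin L → ℝ := fun i => (a * P * ‖h i‖ ^ 2 + b) / P with hw
  have hwpos : ∀ i, 0 < w i := fun i => by
    simp only [hw]; positivity
  have hRHS : ∀ i, ‖h i‖ ^ 2 / w i
      = P * ‖h i‖ ^ 2 / (a * P * ‖h i‖ ^ 2 + b) := by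
    intro i
    have h1 : (0:ℝ) < a * P * ‖h i‖ ^ 2 + b := by positivity
    simp only [hw]
    rw [div_div_eq_mul_div]
    ring_nf
  have key : (∑ i, ‖α i‖ * ‖h i‖) ^ 2 ≤
      (∑ i, ‖α i‖ ^ 2 * w i) * (∑ i, ‖h i‖ ^ 2 / w i) := by
    have cs := Finset.sum_mul_sq_le_sq_mul_sq Finset.univ
      (fun i => ‖α i‖ * Real.sqrt (w i))
      (fun i => ‖h i‖ / Real.sqrt (w i))
    have e1 : ∀ i : Fin L,
        (‖α i‖ * Real.sqrt (w i)) * (‖h i‖ / Real.sqrt (w i))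
          = ‖α i‖ * ‖h i‖ := by
      intro i
      have : Real.sqrt (w i) ≠ 0 := (Real.sqrt_pos.mpr (hwpos i)).ne'
      field_simp
    have e2 : ∀ i : Fin L, (‖α i‖ * Real.sqrt (w i)) ^ 2
        = ‖α i‖ ^ 2 * w i := by
      intro i
      rw [mul_pow, Real.sq_sqrt (hwpos i).le]
    have e3 : ∀ i : Fin L, (‖h i‖ / Real.sqrt (w i)) ^ 2
        = ‖h i‖ ^ 2 / w i := by
      intro i
      rw [div_pow, Real.sq_sqrt (hwpos i).le]
    simpa only [e1, e2, e3] using cs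
  have hsumw : ∑ i, ‖α i‖ ^ 2 * w i ≤ a * S + b := by
    have : ∑ i, ‖α i‖ ^ 2 * w i
        = a * S + (b / P) * ∑ i, ‖α i‖ ^ 2 := by
      simp only [hw, hS, Finset.mul_sum]
      rw [← Finset.sum_add_distrib]
      refine Finset.sum_congr rfl fun i _ => ?_
      field_simp
    rw [this]
    have : (b / P) * ∑ i, ‖α i‖ ^ 2 ≤ (b / P) * P :=
      mul_le_mul_of_nonneg_left hα (by positivity)
    rw [div_mul_cancel₀ b hP.ne'] at this
    linarith
  have habs : ‖∑ i, α i * h i‖ ≤ ∑ i, ‖α i‖ * ‖h i‖ := by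
    calc ‖∑ i, α i * h i‖ ≤ ∑ i, ‖α i * h i‖ :=
          norm_sum_le _ _
      _ = ∑ i, ‖α i‖ * ‖h i‖ := by simp [map_mul]
  have habsnn : 0 ≤ ‖∑ i, α i * h i‖ := norm_nonneg _
  have hsumnn : 0 ≤ ∑ i, ‖α i‖ * ‖h i‖ :=
    habsnn.trans habs
  calc ‖∑ i, α i * h i‖ ^ 2
      ≤ (∑ i, ‖α i‖ * ‖h i‖) ^ 2 := by
        exact pow_le_pow_left₀ habsnn habs 2
    _ ≤ (∑ i, ‖α i‖ ^ 2 * w i) * (∑ i, ‖h i‖ ^ 2 / w i) := key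
    _ ≤ (a * S + b) * (∑ i, ‖h i‖ ^ 2 / w i) := by
        refine mul_le_mul_of_nonneg_right hsumw ?_
        exact Finset.sum_nonneg fun i _ => by positivity
    _ = (∑ l, P * ‖h l‖ ^ 2 / (a * P * ‖h l‖ ^ 2 + b)) * (a * S + b) := by
        rw [mul_comm]
        congr 1
        exact Finset.sum_congr rfl fun i _ => hRHS i
end

section
/- Let L be a positive integer, h ∈ ℂ^L with h ≠ 0, and let a, b, P > 0. Define c := √( P / Σ_{l=1}^L ( |h_l| / (a·P·|h_l|² + b) )² ) and α_i := c · conj(h_i) / (a·P·|h_i|² + b) for i = 1,…,L. Then Σ_{i=1}^L |α_i|² = P and |Σ_{i=1}^L α_i h_i|² / (a·Σ_{i=1}^L |α_i|²·|h_i|² + b) = Σ_{l=1}^L P·|h_l|² / (a·P·|h_l|² + b). -/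
open BigOperators

/-- Achievability for the single-antenna full-CSIS optimization: the explicit sensor gains
`α_i = c·conj(h_i)/(a·P·|h_i|² + b)` with
`c = √(P / Σ_l (|h_l|/(a·P·|h_l|² + b))²)` satisfy the power constraint with equality and
attain the generalized SNR value `Σ_l P·|h_l|²/(a·P·|h_l|² + b)`. -/
theorem stmt9 (L : ℕ) (hL : 0 < L) (h : Fin L → ℂ) (hh : h ≠ 0) (a b P : ℝ)
    (ha : 0 < a) (hb : 0 < b) (hP : 0 < P)
    (c : ℝ)
    (hc : c = Real.sqrt (P / ∑ l, (‖h l‖ / (a * P * ‖h l‖ ^ 2 + b)) ^ 2))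
    (α : Fin L → ℂ)
    (hα : ∀ i, α i = (c : ℂ) * (starRingEnd ℂ) (h i) /
      ((a * P * ‖h i‖ ^ 2 + b : ℝ) : ℂ)) :
    (∑ i, ‖α i‖ ^ 2 = P) ∧
      ‖∑ i, α i * h i‖ ^ 2 /
          (a * ∑ i, ‖α i‖ ^ 2 * ‖h i‖ ^ 2 + b) =
        ∑ l, P * ‖h l‖ ^ 2 / (a * P * ‖h l‖ ^ 2 + b) := by
  obtain ⟨i0, hi0⟩ : ∃ i, h i ≠ 0 := by
    by_contra hcon; push_neg at hcon; exact hh (funext hcon)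
  have hi0' : 0 < ‖h i0‖ := norm_pos_iff.mpr hi0
  have hd : ∀ i, 0 < a * P * ‖h i‖ ^ 2 + b := fun i => by positivity
  have hS : 0 < ∑ l, (‖h l‖ / (a * P * ‖h l‖ ^ 2 + b)) ^ 2 :=
    Finset.sum_pos' (fun i _ => sq_nonneg _)
      ⟨i0, Finset.mem_univ _, pow_pos (div_pos hi0' (hd i0)) 2⟩
  have hQ : 0 < ∑ l, ‖h l‖ ^ 2 / (a * P * ‖h l‖ ^ 2 + b) :=
    Finset.sum_pos' (fun i _ => div_nonneg (sq_nonneg _) (hd i).le)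
      ⟨i0, Finset.mem_univ _, div_pos (pow_pos hi0' 2) (hd i0)⟩
  set S : ℝ := ∑ l, (‖h l‖ / (a * P * ‖h l‖ ^ 2 + b)) ^ 2 with hS_def
  set Q : ℝ := ∑ l, ‖h l‖ ^ 2 / (a * P * ‖h l‖ ^ 2 + b) with hQ_def
  have hc2 : c ^ 2 = P / S := by
    rw [hc]; exact Real.sq_sqrt (div_nonneg hP.le hS.le)
  have hcpos : 0 < c := by
    rw [hc]; exact Real.sqrt_pos.mpr (div_pos hP hS)
  have habs : ∀ i, ‖α i‖ =
      c * ‖h i‖ / (a * P * ‖h i‖ ^ 2 + b) := by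
    intro i
    rw [hα, norm_div, norm_mul, Complex.norm_real, Complex.norm_conj, Complex.norm_real,
      Real.norm_eq_abs, Real.norm_eq_abs, abs_of_pos hcpos, abs_of_pos (hd i)]
  have hpow : ∀ i, ‖α i‖ ^ 2 =
      c ^ 2 * (‖h i‖ / (a * P * ‖h i‖ ^ 2 + b)) ^ 2 := by
    intro i; rw [habs i]; ring
  have hsum1 : ∑ i, ‖α i‖ ^ 2 = P := by
    simp only [hpow]
    rw [← Finset.mul_sum, ← hS_def, hc2, div_mul_cancel₀ _ (ne_of_gt hS)]
  refine ⟨hsum1, ?_⟩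
  have hαh : ∀ i, α i * h i =
      ((c * (‖h i‖ ^ 2 / (a * P * ‖h i‖ ^ 2 + b)) : ℝ) : ℂ) := by
    intro i
    have hconj : (starRingEnd ℂ) (h i) * h i = ((‖h i‖ ^ 2 : ℝ) : ℂ) := by
      rw [← Complex.normSq_eq_norm_sq, ← Complex.mul_conj]; ring
    rw [hα, div_mul_eq_mul_div, mul_assoc, hconj]
    push_cast
    rw [mul_div_assoc]
  have hsumαh : (∑ i, α i * h i) = ((c * Q : ℝ) : ℂ) := by
    calc ∑ i, α i * h i
        = ∑ i, ((c * (‖h i‖ ^ 2 / (a * P * ‖h i‖ ^ 2 + b)) : ℝ) : ℂ) :=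
          Finset.sum_congr rfl fun i _ => hαh i
      _ = ((∑ i, c * (‖h i‖ ^ 2 / (a * P * ‖h i‖ ^ 2 + b)) : ℝ) : ℂ) := by
          rw [Complex.ofReal_sum]
      _ = ((c * Q : ℝ) : ℂ) := by rw [← Finset.mul_sum, hQ_def]
  have habssum : ‖∑ i, α i * h i‖ = c * Q := by
    rw [hsumαh, Complex.norm_real, Real.norm_eq_abs, abs_of_nonneg (mul_nonneg hcpos.le hQ.le)]
  set T : ℝ := ∑ i, ‖h i‖ ^ 2 / (a * P * ‖h i‖ ^ 2 + b) ^ 2 *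
      ‖h i‖ ^ 2 with hT_def
  have hdenom : ∑ i, ‖α i‖ ^ 2 * ‖h i‖ ^ 2 = c ^ 2 * T := by
    rw [hT_def, Finset.mul_sum]
    refine Finset.sum_congr rfl fun i _ => ?_
    rw [hpow, div_pow, mul_assoc]
  have hkey : a * P * T + b * S = Q := by
    rw [hT_def, hS_def, hQ_def, Finset.mul_sum, Finset.mul_sum, ← Finset.sum_add_distrib]
    refine Finset.sum_congr rfl fun i _ => ?_
    have hdi : (a * P * ‖h i‖ ^ 2 + b) ≠ 0 := (hd i).ne'
    field_simp
  have hRHS : ∑ l, P * ‖h l‖ ^ 2 / (a * P * ‖h l‖ ^ 2 + b) = P * Q := by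
    rw [hQ_def, Finset.mul_sum]
    exact Finset.sum_congr rfl fun i _ => by rw [mul_div_assoc]
  rw [habssum, hdenom, hRHS]
  have hden2 : a * (c ^ 2 * T) + b = Q / S := by
    rw [hc2, eq_div_iff hS.ne']
    have hTn : a * (P / S * T) * S = a * P * T := by field_simp
    rw [add_mul, hTn]
    linarith [hkey]
  rw [hden2, mul_pow, hc2]
  field_simp
end

section
/- Let (Ω, μ) be a probability space, let X : Ω → ℝ be integrable with X ≥ 0 almost everywhere and E[X] = 1, and let a, b, P > 0. Then E[ P·X / (a·P·X + b) ] ≥ (E[√X])² · P/(a·P + b). -/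
open MeasureTheory

/-- Phase-only lower bound `E_PO(1) ≤ E_CSIS(1)`: if `X ≥ 0` a.e. with `E[X] = 1`, then
`E[P·X/(a·P·X + b)] ≥ (E[√X])²·P/(a·P + b)`. -/
theorem stmt11 {Ω : Type*} [MeasurableSpace Ω] (μ : Measure Ω) [IsProbabilityMeasure μ]
    (X : Ω → ℝ) (hX : Integrable X μ) (hpos : ∀ᵐ ω ∂μ, 0 ≤ X ω)
    (hmean : ∫ ω, X ω ∂μ = 1) (a b P : ℝ) (ha : 0 < a) (hb : 0 < b) (hP : 0 < P) :
    (∫ ω, Real.sqrt (X ω) ∂μ) ^ 2 * (P / (a * P + b)) ≤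
      ∫ ω, P * X ω / (a * P * X ω + b) ∂μ := by
  set f : Ω → ℝ := fun ω => Real.sqrt (P * X ω / (a * P * X ω + b)) with hf_def
  set g : Ω → ℝ := fun ω => Real.sqrt ((a * P * X ω + b) / P) with hg_def
  -- denominator positivity a.e.
  have hden : ∀ᵐ ω ∂μ, 0 < a * P * X ω + b := by
    filter_upwards [hpos] with ω hω
    have : 0 ≤ a * P * X ω := by positivity
    linarith
  have hXm : AEMeasurable X μ := hX.aemeasurable
  have hfm : AEStronglyMeasurable f μ := by
    apply AEMeasurable.aestronglyMeasurable
    exact Real.continuous_sqrt.measurable.comp_aemeasurable ((aemeasurable_const.mul hXm).div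
      ((aemeasurable_const.mul hXm).add aemeasurable_const))
  have hgm : AEStronglyMeasurable g μ := by
    apply AEMeasurable.aestronglyMeasurable
    exact Real.continuous_sqrt.measurable.comp_aemeasurable
      (((aemeasurable_const.mul hXm).add aemeasurable_const).div aemeasurable_const)
  -- f^2 = PX/(aPX+b) a.e., g^2 = (aPX+b)/P a.e.
  have hfsq : ∀ᵐ ω ∂μ, f ω ^ 2 = P * X ω / (a * P * X ω + b) := by
    filter_upwards [hpos, hden] with ω hω hd
    have h1 : 0 ≤ P * X ω / (a * P * X ω + b) := by positivity
    simp [hf_def, Real.sq_sqrt h1]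
  have hgsq : ∀ᵐ ω ∂μ, g ω ^ 2 = (a * P * X ω + b) / P := by
    filter_upwards [hden] with ω hd
    have h1 : 0 ≤ (a * P * X ω + b) / P := by positivity
    simp [hg_def, Real.sq_sqrt h1]
  -- f * g = sqrt X a.e.
  have hfg : ∀ᵐ ω ∂μ, f ω * g ω = Real.sqrt (X ω) := by
    filter_upwards [hpos, hden] with ω hω hd
    have h1 : 0 ≤ P * X ω / (a * P * X ω + b) := by positivity
    rw [hf_def, hg_def, ← Real.sqrt_mul h1]
    congr 1
    field_simp
  -- integrability of f^2 (bounded by 1/a) and of g^2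
  have hf2_int : Integrable (fun ω => f ω ^ 2) μ := by
    apply Integrable.mono' (integrable_const (1 / a)) (hfm.mul hfm |>.congr ?_)
    · filter_upwards [hpos, hden, hfsq] with ω hω hd hsq
      rw [Real.norm_of_nonneg (by rw [hsq]; positivity)]
      rw [hsq]
      rw [div_le_div_iff₀ hd (by positivity : (0:ℝ) < a)]
      have : 0 ≤ a * b := by positivity
      nlinarith
    · exact Filter.Eventually.of_forall fun ω => (sq (f ω)).symm
  have hg2_int : Integrable (fun ω => g ω ^ 2) μ := by
    apply Integrable.congr (((hX.const_mul (a * P)).add (integrable_const b)).div_const P)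
    filter_upwards [hgsq] with ω h
    exact h.symm
  -- values of the integrals
  have hg2_val : ∫ ω, g ω ^ 2 ∂μ = (a * P + b) / P := by
    rw [integral_congr_ae hgsq]
    rw [show (fun ω => (a * P * X ω + b) / P) = fun ω => (a * P / P) * X ω + b / P by
      funext ω; field_simp]
    rw [integral_add ((hX.const_mul _)) (integrable_const _), integral_const_mul, hmean,
      integral_const]
    simp only [measure_univ, probReal_univ, ENNReal.toReal_one, smul_eq_mul, one_mul, mul_one]
    field_simp
  -- Memℒp
  have hf2 : MemLp f 2 μ := (memLp_two_iff_integrable_sq hfm).2 hf2_int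
  have hg2 : MemLp g 2 μ := (memLp_two_iff_integrable_sq hgm).2 hg2_int
  -- Cauchy-Schwarz via Hölder
  have hconj : Real.HolderConjugate 2 2 := Real.HolderConjugate.two_two
  have hfnn : 0 ≤ᵐ[μ] f := Filter.Eventually.of_forall fun ω => Real.sqrt_nonneg _
  have hgnn : 0 ≤ᵐ[μ] g := Filter.Eventually.of_forall fun ω => Real.sqrt_nonneg _
  have hCS := integral_mul_le_Lp_mul_Lq_of_nonneg hconj hfnn hgnn
    (by rwa [show ENNReal.ofReal (2:ℝ) = 2 by norm_num]) 
    (by rwa [show ENNReal.ofReal (2:ℝ) = 2 by norm_num])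
  rw [integral_congr_ae hfg] at hCS
  have hrp : ∀ h : Ω → ℝ, ∫ ω, h ω ^ (2:ℝ) ∂μ = ∫ ω, h ω ^ 2 ∂μ := by
    intro h
    congr 1
    funext ω
    rw [show ((2:ℝ)) = ((2:ℕ):ℝ) by norm_num, Real.rpow_natCast]
  rw [hrp f, hrp g, hg2_val] at hCS
  -- square both sides
  have hInt_nonneg : 0 ≤ ∫ ω, Real.sqrt (X ω) ∂μ :=
    integral_nonneg fun ω => Real.sqrt_nonneg _
  have hf2_nonneg : 0 ≤ ∫ ω, f ω ^ 2 ∂μ := integral_nonneg fun ω => sq_nonneg _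
  have hsq : (∫ ω, Real.sqrt (X ω) ∂μ) ^ 2 ≤ (∫ ω, f ω ^ 2 ∂μ) * ((a * P + b) / P) := by
    have h2 := mul_le_mul hCS hCS hInt_nonneg (by positivity)
    calc (∫ ω, Real.sqrt (X ω) ∂μ) ^ 2 
        = (∫ ω, Real.sqrt (X ω) ∂μ) * (∫ ω, Real.sqrt (X ω) ∂μ) := sq _
      _ ≤ ((∫ ω, f ω ^ 2 ∂μ) ^ ((1:ℝ)/2) * ((a * P + b) / P) ^ ((1:ℝ)/2)) *
          ((∫ ω, f ω ^ 2 ∂μ) ^ ((1:ℝ)/2) * ((a * P + b) / P) ^ ((1:ℝ)/2)) := h2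
      _ = ((∫ ω, f ω ^ 2 ∂μ) ^ ((1:ℝ)/2) * (∫ ω, f ω ^ 2 ∂μ) ^ ((1:ℝ)/2)) *
          (((a * P + b) / P) ^ ((1:ℝ)/2) * ((a * P + b) / P) ^ ((1:ℝ)/2)) := by ring
      _ = (∫ ω, f ω ^ 2 ∂μ) * ((a * P + b) / P) := by
          rw [← Real.rpow_add' hf2_nonneg (by norm_num),
            ← Real.rpow_add' (by positivity) (by norm_num)]
          norm_num
  have hfin : ∫ ω, f ω ^ 2 ∂μ = ∫ ω, P * X ω / (a * P * X ω + b) ∂μ :=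
    integral_congr_ae hfsq
  rw [← hfin]
  have hpos' : 0 < P / (a * P + b) := by positivity
  calc (∫ ω, Real.sqrt (X ω) ∂μ) ^ 2 * (P / (a * P + b))
      ≤ ((∫ ω, f ω ^ 2 ∂μ) * ((a * P + b) / P)) * (P / (a * P + b)) :=
        mul_le_mul_of_nonneg_right hsq hpos'.le
    _ = ∫ ω, f ω ^ 2 ∂μ := by field_simp
end

section
/- (Corollary 1, core inequality) Let N ≥ 1 be a real number (or positive integer), K ≥ 0 and z ≥ 0. Then min( N·(z+1)/(N·z+1), (z+1)·(N·K+1)/(K+1) ) ≤ (N²·K + 2·N − 1)/(N·(K+1)), with equality when z = (N−1)/(N·(N·K+1)). -/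
/-- Corollary 1 core inequality: for `N ≥ 1`, `K ≥ 0`, `z ≥ 0`,
`min(N(z+1)/(Nz+1), (z+1)(NK+1)/(K+1)) ≤ (N²K + 2N − 1)/(N(K+1))`,
with equality when `z = (N−1)/(N(NK+1))`. -/
theorem stmt14 (N K z : ℝ) (hN : 1 ≤ N) (hK : 0 ≤ K) (hz : 0 ≤ z) :
    min (N * (z + 1) / (N * z + 1)) ((z + 1) * (N * K + 1) / (K + 1)) ≤
        (N ^ 2 * K + 2 * N - 1) / (N * (K + 1)) ∧
      (z = (N - 1) / (N * (N * K + 1)) →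
        min (N * (z + 1) / (N * z + 1)) ((z + 1) * (N * K + 1) / (K + 1)) =
          (N ^ 2 * K + 2 * N - 1) / (N * (K + 1))) := by
  have hN0 : (0:ℝ) < N := by linarith
  have hK1 : (0:ℝ) < K + 1 := by linarith
  have hNK : (0:ℝ) < N * K + 1 := by nlinarith
  have hNz : (0:ℝ) < N * z + 1 := by nlinarith
  have hNK1 : (0:ℝ) < N * (K + 1) := by positivity
  constructor
  · rcases le_total (z * (N * (N * K + 1))) (N - 1) with h | h
    · refine le_trans (min_le_right _ _) ?_
      rw [div_le_div_iff₀ hK1 hNK1]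
      nlinarith
    · refine le_trans (min_le_left _ _) ?_
      rw [div_le_div_iff₀ hNz hNK1]
      nlinarith
  · intro hzeq
    subst hzeq
    have hne : N * (N * K + 1) ≠ 0 := by positivity
    have e1 : N * ((N - 1) / (N * (N * K + 1)) + 1) /
        (N * ((N - 1) / (N * (N * K + 1))) + 1) =
        (N ^ 2 * K + 2 * N - 1) / (N * (K + 1)) := by
      rw [div_eq_div_iff hNz.ne' hNK1.ne']
      field_simp
      ring
    have e2 : ((N - 1) / (N * (N * K + 1)) + 1) * (N * K + 1) / (K + 1) =
        (N ^ 2 * K + 2 * N - 1) / (N * (K + 1)) := by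
      rw [div_eq_div_iff hK1.ne' hNK1.ne']
      field_simp
      ring
    rw [e1, e2, min_self]
end

section
/- Define Q(x) := ∫_x^∞ (1/√(2π))·e^{−y²/2} dy. Let a > 0, τ ∈ ℝ, and p₀, p₁ ∈ (0,1) with p₀ + p₁ = 1. With ω_L := a·√L, the sequence L ↦ −(1/L)·log( p₀·Q(ω_L + τ/ω_L) + p₁·Q(ω_L − τ/ω_L) ) converges to a²/2 as L → ∞ (L ranging over positive integers). -/
set_option maxHeartbeats 1000000

open Filter Topology

/-- The Gaussian tail function `Q(x) = ∫_x^∞ (1/√(2π))·e^{−y²/2} dy`. -/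
noncomputable def gaussQ (x : ℝ) : ℝ :=
  ∫ y in Set.Ioi x, (1 / Real.sqrt (2 * Real.pi)) * Real.exp (-y ^ 2 / 2)

namespace Stmt18Aux

open MeasureTheory Real Set

lemma gInt : Integrable (fun y : ℝ => (1 / Real.sqrt (2 * Real.pi)) * Real.exp (-y ^ 2 / 2)) := by
  have h := (integrable_exp_neg_mul_sq (by norm_num : (0:ℝ) < 1/2)).const_mul
    (1 / Real.sqrt (2 * Real.pi))
  convert h using 2 with y
  ring_nf

lemma expInt (x : ℝ) : IntegrableOn (fun y : ℝ => Real.exp (-y)) (Set.Ioi x) := by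
  have := exp_neg_integrableOn_Ioi x one_pos
  simpa using this

lemma gq_nonneg (x : ℝ) : 0 ≤ gaussQ x := by
  apply setIntegral_nonneg measurableSet_Ioi
  intro y _
  positivity

lemma gq_anti {x y : ℝ} (h : x ≤ y) : gaussQ y ≤ gaussQ x := by
  apply setIntegral_mono_set gInt.integrableOn
  · filter_upwards with y; positivity
  · exact HasSubset.Subset.eventuallyLE (Ioi_subset_Ioi h)

lemma gq_le {x : ℝ} (hx : 1 ≤ x) :
    gaussQ x ≤ (1 / Real.sqrt (2 * Real.pi)) * Real.exp (-x ^ 2 / 2) := by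
  unfold gaussQ
  have key : (∫ y in Set.Ioi x, (1 / Real.sqrt (2 * Real.pi)) * Real.exp (-y ^ 2 / 2))
      ≤ ∫ y in Set.Ioi x,
      ((1 / Real.sqrt (2 * Real.pi)) * Real.exp (-x ^ 2 / 2 + x)) * Real.exp (-y) := by
    apply setIntegral_mono_on gInt.integrableOn
    · exact ((expInt x).const_mul _)
    · exact measurableSet_Ioi
    · intro y hy
      have hy' : x < y := hy
      rw [mul_assoc, ← Real.exp_add]
      apply mul_le_mul_of_nonneg_left _ (by positivity)
      apply Real.exp_le_exp.2
      nlinarith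
  calc _ ≤ _ := key
    _ = (1 / Real.sqrt (2 * Real.pi)) * Real.exp (-x ^ 2 / 2) := by
        rw [MeasureTheory.integral_const_mul, integral_exp_neg_Ioi, mul_assoc, ← Real.exp_add]
        ring_nf

lemma gq_ge {x : ℝ} (hx : 0 ≤ x) :
    (1 / Real.sqrt (2 * Real.pi)) * Real.exp (-(x + 1) ^ 2 / 2) ≤ gaussQ x := by
  unfold gaussQ
  have h1 : (1 / Real.sqrt (2 * Real.pi)) * Real.exp (-(x + 1) ^ 2 / 2)
      ≤ ∫ y in Set.Ioc x (x + 1), (1 / Real.sqrt (2 * Real.pi)) * Real.exp (-y ^ 2 / 2) := by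
    have : (1 / Real.sqrt (2 * Real.pi)) * Real.exp (-(x + 1) ^ 2 / 2)
        = ∫ _ in Set.Ioc x (x + 1),
            (1 / Real.sqrt (2 * Real.pi)) * Real.exp (-(x + 1) ^ 2 / 2) := by
      rw [setIntegral_const, Real.volume_real_Ioc]
      simp [ENNReal.toReal_ofReal]
    rw [this]
    apply setIntegral_mono_on (integrableOn_const (by simp [Real.volume_Ioc]))
      (gInt.integrableOn) measurableSet_Ioc
    intro y hy
    apply mul_le_mul_of_nonneg_left _ (by positivity)
    apply Real.exp_le_exp.2
    have h1 := hy.1; have h2 := hy.2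
    nlinarith
  refine h1.trans ?_
  apply setIntegral_mono_set gInt.integrableOn
  · filter_upwards with y; positivity
  · exact HasSubset.Subset.eventuallyLE Ioc_subset_Ioi_self

lemma sqrt_nat_atTop : Tendsto (fun L : ℕ => Real.sqrt L) atTop atTop := by
  apply tendsto_atTop_atTop.2
  intro b
  refine ⟨⌈(max b 0) ^ 2⌉₊, fun L hL => ?_⟩
  have h1 : (max b 0) ^ 2 ≤ (L : ℝ) := (Nat.ceil_le.1 hL).trans (le_refl _) |>.trans (le_refl _)
  calc b ≤ max b 0 := le_max_left _ _
    _ = Real.sqrt ((max b 0) ^ 2) := (Real.sqrt_sq (le_max_right _ _)).symm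
    _ ≤ Real.sqrt L := Real.sqrt_le_sqrt h1

lemma inv_sqrt_nat : Tendsto (fun L : ℕ => 1 / Real.sqrt L) atTop (nhds 0) := by
  simpa [one_div, Pi.inv_def] using sqrt_nat_atTop.inv_tendsto_atTop

/-- Key asymptotic helper. -/
lemma helper (a b d C : ℝ) (ha : 0 < a) :
    Tendsto (fun L : ℕ =>
        (1 / (L : ℝ)) * ((a * Real.sqrt L + b / (a * Real.sqrt L) + d) ^ 2 / 2 + C))
      atTop (nhds (a ^ 2 / 2)) := by
  have h1 : Tendsto (fun L : ℕ => 1 / (L : ℝ)) atTop (nhds 0) :=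
    tendsto_one_div_atTop_nhds_zero_nat
  have hg : Tendsto (fun L : ℕ =>
      a ^ 2 / 2 + (b ^ 2 / (2 * a ^ 2)) * ((1 / (L : ℝ)) * (1 / (L : ℝ)))
        + (d ^ 2 / 2 + b + C) * (1 / (L : ℝ)) + (a * d) * (1 / Real.sqrt L)
        + (b * d / a) * ((1 / (L : ℝ)) * (1 / Real.sqrt L)))
      atTop (nhds (a ^ 2 / 2)) := by
    have := (((((tendsto_const_nhds : Tendsto (fun _ : ℕ => a ^ 2 / 2) atTop _).add (((h1.mul h1).const_mul (b ^ 2 / (2 * a ^ 2))))).add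
      (h1.const_mul (d ^ 2 / 2 + b + C))).add (inv_sqrt_nat.const_mul (a * d))).add
      ((h1.mul inv_sqrt_nat).const_mul (b * d / a)))
    simpa using this
  refine hg.congr' ?_
  filter_upwards [eventually_ge_atTop 1] with L hL
  have hL0 : (0 : ℝ) < (L : ℝ) := by exact_mod_cast Nat.lt_of_lt_of_le Nat.zero_lt_one hL
  have hs0 : 0 < Real.sqrt L := Real.sqrt_pos.2 hL0
  have hs2 : Real.sqrt L ^ 2 = (L : ℝ) := Real.sq_sqrt hL0.le
  have hane : a ≠ 0 := ha.ne'
  set u := Real.sqrt L with hu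
  have hsne : u ≠ 0 := hs0.ne'
  rw [← hs2]
  field_simp
  ring

end Stmt18Aux

/-- With `ω_L = a·√L`, the Bayesian error probability
`p₀·Q(ω_L + τ/ω_L) + p₁·Q(ω_L − τ/ω_L)` has error exponent
`lim_{L→∞} −(1/L)·log(…) = a²/2`, independent of `p₀, p₁, τ`. -/
theorem stmt18 (a τ p₀ p₁ : ℝ) (ha : 0 < a)
    (hp₀ : p₀ ∈ Set.Ioo (0 : ℝ) 1) (hp₁ : p₁ ∈ Set.Ioo (0 : ℝ) 1)
    (hsum : p₀ + p₁ = 1) :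
    Tendsto (fun L : ℕ =>
        -(1 / (L : ℝ)) * Real.log
          (p₀ * gaussQ (a * Real.sqrt (L : ℝ) + τ / (a * Real.sqrt (L : ℝ))) +
            p₁ * gaussQ (a * Real.sqrt (L : ℝ) - τ / (a * Real.sqrt (L : ℝ)))))
      atTop (nhds (a ^ 2 / 2)) := by
  open Stmt18Aux Real in
  set c : ℝ := 1 / Real.sqrt (2 * Real.pi) with hc
  have hcpos : 0 < c := by
    have := Real.pi_pos
    positivity
  set s : ℝ := |τ| with hs
  have hs0 : 0 ≤ s := abs_nonneg τ
  -- the lower and upper comparison sequences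
  have hlow := helper a (-s) 0 (-(Real.log c)) ha
  have hupp := helper a s 1 (-(Real.log c) - Real.log p₁) ha
  -- the argument  a√L - s/(a√L)  tends to infinity
  have hA : Tendsto (fun L : ℕ => a * Real.sqrt L) atTop atTop :=
    Tendsto.const_mul_atTop ha sqrt_nat_atTop
  have hB : Tendsto (fun L : ℕ => a * Real.sqrt L + -(s / a)) atTop atTop :=
    tendsto_atTop_add_const_right atTop (-(s / a)) hA
  have homega : Tendsto (fun L : ℕ => a * Real.sqrt L - s / (a * Real.sqrt L)) atTop atTop := by
    apply tendsto_atTop_mono' atTop _ hB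
    filter_upwards [eventually_ge_atTop 1] with L hL
    have hL1 : (1 : ℝ) ≤ Real.sqrt L := by
      rw [show (1:ℝ) = Real.sqrt 1 by simp]
      exact Real.sqrt_le_sqrt (by exact_mod_cast hL)
    have h1 : a ≤ a * Real.sqrt L := by nlinarith
    have h2 : s / (a * Real.sqrt L) ≤ s / a :=
      div_le_div_of_nonneg_left hs0 ha h1 |>.trans (le_refl _)
    linarith
  have hev : ∀ᶠ L : ℕ in atTop,
      (1 / (L : ℝ)) * ((a * Real.sqrt L + (-s) / (a * Real.sqrt L) + 0) ^ 2 / 2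
          + (-(Real.log c))) ≤
        -(1 / (L : ℝ)) * Real.log
          (p₀ * gaussQ (a * Real.sqrt (L : ℝ) + τ / (a * Real.sqrt (L : ℝ))) +
            p₁ * gaussQ (a * Real.sqrt (L : ℝ) - τ / (a * Real.sqrt (L : ℝ)))) ∧
        -(1 / (L : ℝ)) * Real.log
          (p₀ * gaussQ (a * Real.sqrt (L : ℝ) + τ / (a * Real.sqrt (L : ℝ))) +
            p₁ * gaussQ (a * Real.sqrt (L : ℝ) - τ / (a * Real.sqrt (L : ℝ)))) ≤
        (1 / (L : ℝ)) * ((a * Real.sqrt L + s / (a * Real.sqrt L) + 1) ^ 2 / 2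
          + (-(Real.log c) - Real.log p₁)) := by
    filter_upwards [homega.eventually_ge_atTop 1, eventually_ge_atTop 1] with L h1 hL
    have hLpos : (0 : ℝ) < (L : ℝ) := by exact_mod_cast Nat.lt_of_lt_of_le Nat.zero_lt_one hL
    set ω : ℝ := a * Real.sqrt L with hω
    have hωpos : 0 < ω := by
      have : (0:ℝ) < Real.sqrt L := Real.sqrt_pos.2 hLpos
      positivity
    have hd1 : τ / ω ≤ s / ω := (div_le_div_iff_of_pos_right hωpos).2 (le_abs_self τ)
    have hd2 : -(s / ω) ≤ τ / ω := by
      have := (div_le_div_iff_of_pos_right hωpos).2 (neg_abs_le τ)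
      rwa [neg_div] at this
    have hxm1 : 1 ≤ ω - s / ω := h1
    have hxp0 : 0 ≤ ω + s / ω := by
      have : 0 ≤ s / ω := div_nonneg hs0 hωpos.le
      linarith
    set P : ℝ := p₀ * gaussQ (ω + τ / ω) + p₁ * gaussQ (ω - τ / ω) with hP
    have hQ1 : gaussQ (ω + τ / ω) ≤ gaussQ (ω - s / ω) := gq_anti (by linarith)
    have hQ2 : gaussQ (ω - τ / ω) ≤ gaussQ (ω - s / ω) := gq_anti (by linarith)
    have hQ3 : gaussQ (ω + s / ω) ≤ gaussQ (ω - τ / ω) := gq_anti (by linarith)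
    have hPle : P ≤ gaussQ (ω - s / ω) := by
      have e0 := gq_nonneg (ω + τ / ω)
      have e1 := gq_nonneg (ω - τ / ω)
      nlinarith [hp₀.1, hp₁.1, hp₀.2, hp₁.2]
    have hPge : p₁ * gaussQ (ω + s / ω) ≤ P := by
      have e0 := gq_nonneg (ω + τ / ω)
      nlinarith [hp₀.1, hp₁.1]
    have hQm_le : gaussQ (ω - s / ω) ≤ c * Real.exp (-(ω - s / ω) ^ 2 / 2) := gq_le hxm1
    have hQp_ge : c * Real.exp (-((ω + s / ω) + 1) ^ 2 / 2) ≤ gaussQ (ω + s / ω) := gq_ge hxp0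
    have hPpos : 0 < P := by
      have h5 : 0 < p₁ * (c * Real.exp (-((ω + s / ω) + 1) ^ 2 / 2)) := by
        have := hp₁.1; positivity
      have h6 : p₁ * (c * Real.exp (-((ω + s / ω) + 1) ^ 2 / 2)) ≤ P :=
        le_trans (mul_le_mul_of_nonneg_left hQp_ge hp₁.1.le) hPge
      exact h5.trans_le h6
    have hlog_up : Real.log P ≤ Real.log c - (ω - s / ω) ^ 2 / 2 := by
      have := Real.log_le_log hPpos (hPle.trans hQm_le)
      rw [Real.log_mul hcpos.ne' (Real.exp_ne_zero _), Real.log_exp] at this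
      linarith
    have hlog_dn : Real.log p₁ + Real.log c - ((ω + s / ω) + 1) ^ 2 / 2 ≤ Real.log P := by
      have h5 : 0 < p₁ * (c * Real.exp (-((ω + s / ω) + 1) ^ 2 / 2)) := by
        have := hp₁.1; positivity
      have h6 := Real.log_le_log h5
        (le_trans (mul_le_mul_of_nonneg_left hQp_ge hp₁.1.le) hPge)
      rw [Real.log_mul hp₁.1.ne' (by positivity),
        Real.log_mul hcpos.ne' (Real.exp_ne_zero _), Real.log_exp] at h6
      linarith
    have hLinv : (0:ℝ) ≤ 1 / (L : ℝ) := by positivity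
    constructor
    · have e1 : a * Real.sqrt L + (-s) / (a * Real.sqrt L) + 0 = ω - s / ω := by
        rw [hω]; ring
      rw [e1]
      have key := mul_le_mul_of_nonneg_left
        (show (ω - s / ω) ^ 2 / 2 + (-(Real.log c)) ≤ -Real.log P by linarith) hLinv
      calc (1 / (L : ℝ)) * ((ω - s / ω) ^ 2 / 2 + (-(Real.log c)))
          ≤ (1 / (L : ℝ)) * (-Real.log P) := key
        _ = -(1 / (L : ℝ)) * Real.log P := by ring
    · have e2 : a * Real.sqrt L + s / (a * Real.sqrt L) + 1 = (ω + s / ω) + 1 := by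
        rw [hω]
      rw [e2]
      have key := mul_le_mul_of_nonneg_left
        (show -Real.log P ≤ ((ω + s / ω) + 1) ^ 2 / 2 + (-(Real.log c) - Real.log p₁) by
          linarith) hLinv
      calc -(1 / (L : ℝ)) * Real.log P = (1 / (L : ℝ)) * (-Real.log P) := by ring
        _ ≤ _ := key
  exact tendsto_of_tendsto_of_tendsto_of_le_of_le' hlow hupp
    (hev.mono fun L h => h.1) (hev.mono fun L h => h.2)
end
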